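/- Let Λ be a finite-dimensional algebra over an algebraically closed field k, and let (T, F) be a torsion pair in mod Λ. Then (T, F) is splitting if and only if for every module M in T, the inverse Auslander–Reiten translate τ⁻¹M also lies in T. -/

import Mathlib

open CategoryTheory CategoryTheory.Limits

universe u

section Prelude
variable {A : Type u} [Ring A]

/-- finite direct sum of `d` copies of `T` -/
noncomputable def copies (A : Type u) [Ring A] (T : ModuleCat.{u} A) (d : ℕ) :
    ModuleCat.{u} A := ModuleCat.of A (Fin d → T)

/-- `M` is generated by `T`. -/
def IsGenBy (T M : ModuleCat.{u} A) : Prop :=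
  ∃ (d : ℕ) (f : copies A T d ⟶ M), Function.Surjective f

/-- `M` is cogenerated by `T`. -/
def IsCogenBy (T M : ModuleCat.{u} A) : Prop :=
  ∃ (d : ℕ) (f : M ⟶ copies A T d), Function.Injective f

/-- `M` lies in `add T`: it is a direct summand of a finite direct sum of copies of `T`. -/
def InAdd (T M : ModuleCat.{u} A) : Prop :=
  ∃ (d : ℕ) (i : M ⟶ copies A T d) (p : copies A T d ⟶ M), i ≫ p = 𝟙 M

/-- `N` is a direct summand of `D`. -/
def IsSummand (N D : ModuleCat.{u} A) : Prop :=
  ∃ (i : N ⟶ D) (p : D ⟶ N), i ≫ p = 𝟙 N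

/-- Indecomposable module: nonzero and no nontrivial idempotent endomorphism. -/
def Indec (M : ModuleCat.{u} A) : Prop :=
  ¬ IsZero M ∧ ∀ e : M ⟶ M, e ≫ e = e → e = 0 ∨ e = 𝟙 M

/-- `0 → L → E → M → 0` is a short exact sequence. -/
def IsSES {L E M : ModuleCat.{u} A} (f : L ⟶ E) (g : E ⟶ M) : Prop :=
  Function.Injective f ∧ Function.Surjective g ∧ Function.Exact f g

/-- projective dimension at most `n`. -/
def ProjDimLE : ℕ → ModuleCat.{u} A → Prop
  | 0, M => Projective M
  | n+1, M => Projective M ∨ ∃ (K P : ModuleCat.{u} A) (f : K ⟶ P) (g : P ⟶ M),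
      Projective P ∧ Module.Finite A K ∧ IsSES f g ∧ ProjDimLE n K

/-- injective dimension at most `n`. -/
def InjDimLE : ℕ → ModuleCat.{u} A → Prop
  | 0, M => Injective M
  | n+1, M => Injective M ∨ ∃ (I C : ModuleCat.{u} A) (f : M ⟶ I) (g : I ⟶ C),
      Injective I ∧ Module.Finite A C ∧ IsSES f g ∧ InjDimLE n C

/-- global dimension at most `n` (tested on finitely generated modules). -/
def GlobalDimLE (A : Type u) [Ring A] (n : ℕ) : Prop :=
  ∀ M : ModuleCat.{u} A, Module.Finite A M → ProjDimLE n M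

/-- global dimension equal to `2`. -/
def GlobalDimEq2 (A : Type u) [Ring A] : Prop :=
  GlobalDimLE A 2 ∧ ¬ GlobalDimLE A 1

/-- dominant dimension at least 2 : there is an exact sequence `0 → A → I₀ → I₁`
with `I₀, I₁` projective-injective. -/
def DomDimGE2 (A : Type u) [Ring A] : Prop :=
  ∃ (I₀ I₁ : ModuleCat.{u} A) (f : ModuleCat.of A A ⟶ I₀) (g : I₀ ⟶ I₁),
    Injective I₀ ∧ Projective I₀ ∧ Injective I₁ ∧ Projective I₁ ∧
    Function.Injective f ∧ Function.Exact f g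

/-- `Ext¹(X, Y) = 0`, expressed by the splitting of all short exact sequences
`0 → Y → E → X → 0`. -/
def Ext1Vanish (X Y : ModuleCat.{u} A) : Prop :=
  ∀ (E : ModuleCat.{u} A) (f : Y ⟶ E) (g : E ⟶ X),
    IsSES f g → ∃ s : X ⟶ E, s ≫ g = 𝟙 X

/-- `T` is a tilting module. -/
structure IsTilting (T : ModuleCat.{u} A) : Prop where
  fg : Module.Finite A T
  pd : ProjDimLE 1 T
  rigid : Ext1Vanish T T
  cores : ∃ (T₀ T₁ : ModuleCat.{u} A) (f : ModuleCat.of A A ⟶ T₀) (g : T₀ ⟶ T₁),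
    IsSES f g ∧ InAdd T T₀ ∧ InAdd T T₁

/-- `T` is a cotilting module. -/
structure IsCotilting (T : ModuleCat.{u} A) : Prop where
  fg : Module.Finite A T
  id : InjDimLE 1 T
  rigid : Ext1Vanish T T
  res : ∀ I : ModuleCat.{u} A, Module.Finite A I → Injective I →
    ∃ (T₁ T₀ : ModuleCat.{u} A) (f : T₁ ⟶ T₀) (g : T₀ ⟶ I),
      IsSES f g ∧ InAdd T T₀ ∧ InAdd T T₁

/-- `0 → L → E → M → 0` is an almost split (Auslander–Reiten) sequence. -/
structure IsAlmostSplit {L E M : ModuleCat.{u} A} (f : L ⟶ E) (g : E ⟶ M) : Prop where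
  ses : IsSES f g
  not_split : ¬ ∃ s : M ⟶ E, s ≫ g = 𝟙 M
  indec_left : Indec L
  indec_right : Indec M
  right_almost : ∀ (X : ModuleCat.{u} A) (h : X ⟶ M),
    (¬ ∃ s : M ⟶ X, s ≫ h = 𝟙 M) → ∃ t : X ⟶ E, t ≫ g = h
  left_almost : ∀ (X : ModuleCat.{u} A) (h : L ⟶ X),
    (¬ ∃ r : X ⟶ L, h ≫ r = 𝟙 L) → ∃ t : E ⟶ X, f ≫ t = h

/-- The Auslander–Reiten translation `τ` (and its inverse `τ⁻¹`),
characterized by almost split sequences. -/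
structure ARTranslation (A : Type u) [Ring A] where
  τ : ModuleCat.{u} A → ModuleCat.{u} A
  τinv : ModuleCat.{u} A → ModuleCat.{u} A
  fg_τ : ∀ M : ModuleCat.{u} A, Module.Finite A M → Module.Finite A (τ M)
  fg_τinv : ∀ M : ModuleCat.{u} A, Module.Finite A M → Module.Finite A (τinv M)
  τ_proj : ∀ M : ModuleCat.{u} A, Module.Finite A M → Projective M → IsZero (τ M)
  τinv_inj : ∀ M : ModuleCat.{u} A, Module.Finite A M → Injective M → IsZero (τinv M)
  τ_spec : ∀ M : ModuleCat.{u} A, Module.Finite A M → Indec M → ¬ Projective M →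
    ∃ (E : ModuleCat.{u} A) (f : τ M ⟶ E) (g : E ⟶ M), IsAlmostSplit f g
  τinv_spec : ∀ M : ModuleCat.{u} A, Module.Finite A M → Indec M → ¬ Injective M →
    ∃ (E : ModuleCat.{u} A) (f : M ⟶ E) (g : E ⟶ τinv M), IsAlmostSplit f g
  τ_iso : ∀ M N : ModuleCat.{u} A, Nonempty (M ≅ N) → Nonempty (τ M ≅ τ N)
  τinv_iso : ∀ M N : ModuleCat.{u} A, Nonempty (M ≅ N) → Nonempty (τinv M ≅ τinv N)
  τ_add : ∀ M N : ModuleCat.{u} A, Nonempty (τ (M ⊞ N) ≅ τ M ⊞ τ N)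
  τinv_add : ∀ M N : ModuleCat.{u} A, Nonempty (τinv (M ⊞ N) ≅ τinv M ⊞ τinv N)

/-- A torsion pair `(T, F)` in `mod A`. -/
structure TorsionPair (A : Type u) [Ring A] where
  tors : Set (ModuleCat.{u} A)
  free : Set (ModuleCat.{u} A)
  fg_tors : ∀ M ∈ tors, Module.Finite A M
  fg_free : ∀ N ∈ free, Module.Finite A N
  hom_zero : ∀ M ∈ tors, ∀ N ∈ free, ∀ f : M ⟶ N, f = 0
  max_tors : ∀ M : ModuleCat.{u} A, Module.Finite A M →
    (∀ N ∈ free, ∀ f : M ⟶ N, f = 0) → M ∈ tors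
  max_free : ∀ N : ModuleCat.{u} A, Module.Finite A N →
    (∀ M ∈ tors, ∀ f : M ⟶ N, f = 0) → N ∈ free

/-- A torsion pair is splitting if every f.g. indecomposable lies in one of the classes. -/
def TorsionPair.Splitting (P : TorsionPair A) : Prop :=
  ∀ M : ModuleCat.{u} A, Module.Finite A M → Indec M → M ∈ P.tors ∨ M ∈ P.free

/-- Membership in `C_Λ = Gen(Q̃) ∩ Cogen(Q̃)`, `Q̃` the sum of the indecomposable
projective-injective modules: generated and cogenerated by a projective-injective module. -/
def InC (M : ModuleCat.{u} A) : Prop :=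
  (∃ Q : ModuleCat.{u} A, Module.Finite A Q ∧ Projective Q ∧ Injective Q ∧ IsGenBy Q M) ∧
  (∃ Q : ModuleCat.{u} A, Module.Finite A Q ∧ Projective Q ∧ Injective Q ∧ IsCogenBy Q M)

/-- `K` is a syzygy of `M`: kernel of an epimorphism from a f.g. projective onto `M`. -/
def IsSyzygy (K M : ModuleCat.{u} A) : Prop :=
  ∃ (P : ModuleCat.{u} A) (f : K ⟶ P) (g : P ⟶ M),
    Projective P ∧ Module.Finite A P ∧ IsSES f g

/-- `g : P ⟶ M` is a projective cover. -/
def IsProjCover {P M : ModuleCat.{u} A} (g : P ⟶ M) : Prop :=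
  Projective P ∧ Module.Finite A P ∧ Function.Surjective g ∧
    ∀ (X : ModuleCat.{u} A) (h : X ⟶ P), Function.Surjective (h ≫ g) → Function.Surjective h

/-- `K` is the minimal syzygy `Ω M`: kernel of a projective cover of `M`. -/
def IsMinSyzygy (K M : ModuleCat.{u} A) : Prop :=
  ∃ (P : ModuleCat.{u} A) (f : K ⟶ P) (g : P ⟶ M), IsSES f g ∧ IsProjCover g

/-- `C` is a cosyzygy of `M`: cokernel of a monomorphism from `M` into a f.g. injective. -/
def IsCosyzygy (C M : ModuleCat.{u} A) : Prop :=
  ∃ (I : ModuleCat.{u} A) (f : M ⟶ I) (g : I ⟶ C),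
    Injective I ∧ Module.Finite A I ∧ IsSES f g

/-- `M` is basic: no indecomposable occurs twice in a decomposition. -/
def IsBasic (M : ModuleCat.{u} A) : Prop :=
  ∀ X : ModuleCat.{u} A, Indec X → ¬ IsSummand (X ⊞ X) M

/-- `D` is a basic f.g. injective cogenerator (i.e. `D ≅ DA`). -/
def IsMinimalInjectiveCogenerator (D : ModuleCat.{u} A) : Prop :=
  Module.Finite A D ∧ Injective D ∧ IsBasic D ∧
    ∀ M : ModuleCat.{u} A, Module.Finite A M → IsCogenBy D M

end Prelude

section Aux
variable {A : Type u} [Ring A]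

theorem hom_eq_zero' {M N : ModuleCat.{u} A} (f : M ⟶ N) (h : ∀ x, f x = 0) : f = 0 :=
  ModuleCat.hom_ext (LinearMap.ext fun x => (h x).trans rfl)

theorem factor_thru {L E M V : ModuleCat.{u} A} {f : L ⟶ E} {g : E ⟶ M}
    (hs : Function.Surjective g) (hex : Function.Exact f g)
    (v : E ⟶ V) (hv : f ≫ v = 0) : ∃ w : M ⟶ V, g ≫ w = v := by
  have hle : LinearMap.ker g.hom ≤ LinearMap.ker v.hom := by
    intro x hx
    rw [LinearMap.mem_ker] at hx ⊢
    obtain ⟨y, hy⟩ := (hex x).mp hx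
    rw [← hy]
    exact ConcreteCategory.congr_hom hv y
  let e1 := LinearMap.quotKerEquivOfSurjective g.hom hs
  refine ⟨ModuleCat.ofHom ((Submodule.liftQ (LinearMap.ker g.hom) v.hom hle).comp e1.symm.toLinearMap), ?_⟩
  apply ModuleCat.hom_ext; apply LinearMap.ext; intro x
  have h1 : e1 (Submodule.Quotient.mk x) = g x := rfl
  show (Submodule.liftQ (LinearMap.ker g.hom) v.hom hle) (e1.symm (g x)) = v x
  rw [← h1, LinearEquiv.symm_apply_apply]
  rfl

theorem section_of_retraction {L E M : ModuleCat.{u} A} {f : L ⟶ E} {g : E ⟶ M}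
    (hses : IsSES f g) (r : E ⟶ L) (hr : f ≫ r = 𝟙 L) :
    ∃ s : M ⟶ E, s ≫ g = 𝟙 M := by
  obtain ⟨hinj, hsurj, hex⟩ := hses
  have hv : f ≫ (𝟙 E - r ≫ f) = 0 := by
    simp only [Preadditive.comp_sub, Category.comp_id, ← Category.assoc, hr, Category.id_comp,
      sub_self]
  obtain ⟨s, hs⟩ := factor_thru hsurj hex (𝟙 E - r ≫ f) hv
  refine ⟨s, ?_⟩
  apply ModuleCat.hom_ext; apply LinearMap.ext; intro m
  obtain ⟨x, rfl⟩ := hsurj m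
  have h1 : s (g x) = x - f (r x) := ConcreteCategory.congr_hom hs x
  show g (s (g x)) = g x
  rw [h1]
  have h2 : g (f (r x)) = 0 := (hex _).mpr ⟨r x, rfl⟩
  simp [map_sub, h2]

variable (P : TorsionPair A)

theorem TorsionPair.zero_mem {Z : ModuleCat.{u} A} (hz : IsZero Z) : Z ∈ P.tors := by
  have hsub : Subsingleton Z := by
    have h0 : (𝟙 Z : Z ⟶ Z) = 0 := hz.eq_of_src _ _
    refine ⟨fun a b => ?_⟩
    have ha : a = (𝟙 Z : Z ⟶ Z) a := rfl
    have hb : b = (𝟙 Z : Z ⟶ Z) b := rfl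
    rw [ha, hb, h0]; rfl
  refine P.max_tors Z (Module.Finite.of_surjective (0 : A →ₗ[A] Z) ?_) ?_
  · intro z; exact ⟨0, Subsingleton.elim _ _⟩
  · intro N _ f
    refine hom_eq_zero' f fun x => ?_
    have : x = (0 : Z) := Subsingleton.elim _ _
    rw [this, map_zero]

theorem TorsionPair.iso_mem {X Y : ModuleCat.{u} A} (e : X ≅ Y) (hX : X ∈ P.tors) :
    Y ∈ P.tors := by
  haveI := P.fg_tors X hX
  refine P.max_tors Y (Module.Finite.of_surjective (M := X) e.hom.hom ?_) ?_
  · intro y; exact ⟨e.inv y, ConcreteCategory.congr_hom e.inv_hom_id y⟩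
  · intro N hN f
    have h1 : e.hom ≫ f = 0 := P.hom_zero X hX N hN _
    calc f = e.inv ≫ (e.hom ≫ f) := by rw [← Category.assoc, e.inv_hom_id, Category.id_comp]
    _ = 0 := by rw [h1, Limits.comp_zero]

theorem TorsionPair.quotient_mem {X Y : ModuleCat.{u} A} (g : X ⟶ Y)
    (hs : Function.Surjective g) (hX : X ∈ P.tors) : Y ∈ P.tors := by
  haveI := P.fg_tors X hX
  refine P.max_tors Y (Module.Finite.of_surjective (M := X) g.hom hs) ?_
  intro N hN f
  have h1 : g ≫ f = 0 := P.hom_zero X hX N hN _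
  refine hom_eq_zero' f fun y => ?_
  obtain ⟨x, rfl⟩ := hs y
  exact ConcreteCategory.congr_hom h1 x

theorem TorsionPair.retract_mem {X M : ModuleCat.{u} A} (e : X ⟶ M) (p : M ⟶ X)
    (hep : e ≫ p = 𝟙 X) (hM : M ∈ P.tors) : X ∈ P.tors := by
  haveI := P.fg_tors M hM
  refine P.max_tors X (Module.Finite.of_surjective (M := M) p.hom ?_) ?_
  · intro x; exact ⟨e x, ConcreteCategory.congr_hom hep x⟩
  · intro N hN f
    have h1 : p ≫ f = 0 := P.hom_zero M hM N hN _
    calc f = 𝟙 X ≫ f := by rw [Category.id_comp]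
    _ = e ≫ (p ≫ f) := by rw [← hep, Category.assoc]
    _ = 0 := by rw [h1, Limits.comp_zero]

theorem TorsionPair.biprod_mem {X Y : ModuleCat.{u} A} (hX : X ∈ P.tors) (hY : Y ∈ P.tors) :
    (X ⊞ Y : ModuleCat.{u} A) ∈ P.tors := by
  haveI := P.fg_tors X hX
  haveI := P.fg_tors Y hY
  haveI : Module.Finite A (ModuleCat.of A (X × Y)) := Module.Finite.prod (M := X) (N := Y)
  refine P.max_tors _ (Module.Finite.equiv
    ((ModuleCat.biprodIsoProd X Y).symm.toLinearEquiv)) ?_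
  intro N hN f
  have h1 : biprod.inl ≫ f = 0 := P.hom_zero X hX N hN _
  have h2 : biprod.inr ≫ f = 0 := P.hom_zero Y hY N hN _
  calc f = 𝟙 (X ⊞ Y) ≫ f := by rw [Category.id_comp]
  _ = (biprod.fst ≫ biprod.inl + biprod.snd ≫ biprod.inr) ≫ f := by rw [biprod.total]
  _ = biprod.fst ≫ (biprod.inl ≫ f) + biprod.snd ≫ (biprod.inr ≫ f) := by
      rw [Preadditive.add_comp, Category.assoc, Category.assoc]
  _ = 0 := by rw [h1, h2, Limits.comp_zero, Limits.comp_zero, add_zero]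

theorem TorsionPair.ext_mem {L E M : ModuleCat.{u} A} (f : L ⟶ E) (g : E ⟶ M)
    (hses : IsSES f g) (hfin : Module.Finite A E) (hL : L ∈ P.tors) (hM : M ∈ P.tors) :
    E ∈ P.tors := by
  refine P.max_tors E hfin ?_
  intro N hN v
  have hfv : f ≫ v = 0 := P.hom_zero L hL N hN _
  obtain ⟨w, hw⟩ := factor_thru hses.2.1 hses.2.2 v hfv
  have : w = 0 := P.hom_zero M hM N hN _
  rw [← hw, this, Limits.comp_zero]

theorem subsingleton_of_isZero {Z : ModuleCat.{u} A} (hz : IsZero Z) : Subsingleton Z := by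
  have h0 : (𝟙 Z : Z ⟶ Z) = 0 := hz.eq_of_src _ _
  refine ⟨fun a b => ?_⟩
  have ha : a = (𝟙 Z : Z ⟶ Z) a := rfl
  have hb : b = (𝟙 Z : Z ⟶ Z) b := rfl
  rw [ha, hb, h0]; rfl

theorem finite_of_isZero {Z : ModuleCat.{u} A} (hz : IsZero Z) : Module.Finite A Z := by
  have := subsingleton_of_isZero hz
  exact Module.Finite.of_surjective (0 : A →ₗ[A] Z) fun z => ⟨0, Subsingleton.elim _ _⟩

theorem injective_of_isZero {Z : ModuleCat.{u} A} (hz : IsZero Z) : Injective Z := by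
  constructor
  intro X Y g f hf
  exact ⟨0, hz.eq_of_tgt _ _⟩

theorem finite_of_ses {L E M : ModuleCat.{u} A} {f : L ⟶ E} {g : E ⟶ M} (hses : IsSES f g)
    (hL : Module.Finite A L) (hM : Module.Finite A M) : Module.Finite A E := by
  rw [Module.finite_def]
  have h1 : (Submodule.map g.hom ⊤).FG := by
    rw [Submodule.map_top, LinearMap.range_eq_top.mpr hses.2.1]
    exact Module.finite_def.mp hM
  have h2 : (⊤ ⊓ LinearMap.ker g.hom : Submodule A E).FG := by
    rw [top_inf_eq]
    have : LinearMap.ker g.hom = LinearMap.range f.hom := by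
      ext x
      rw [LinearMap.mem_ker, LinearMap.mem_range]
      exact (hses.2.2 x).trans Iff.rfl
    rw [this, ← Submodule.map_top]
    exact Submodule.FG.map _ (Module.finite_def.mp hL)
  exact Submodule.fg_of_fg_map_of_fg_inf_ker g.hom h1 h2

/-- a nonzero retract of an indecomposable is isomorphic to it -/
theorem iso_of_retract_of_indec {X M : ModuleCat.{u} A} (hM : Indec M) (hX : ¬ IsZero X)
    (j : X ⟶ M) (r : M ⟶ X) (hjr : j ≫ r = 𝟙 X) : Nonempty (X ≅ M) := by
  have hidem : (r ≫ j) ≫ (r ≫ j) = r ≫ j := by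
    rw [Category.assoc, ← Category.assoc j r j, hjr, Category.id_comp]
  rcases hM.2 (r ≫ j) hidem with h0 | h1
  · exfalso
    apply hX
    rw [IsZero.iff_id_eq_zero]
    calc 𝟙 X = (j ≫ r) ≫ (j ≫ r) := by rw [hjr, Category.id_comp]
    _ = j ≫ (r ≫ j) ≫ r := by simp only [Category.assoc]
    _ = 0 := by rw [h0, Limits.zero_comp, Limits.comp_zero]
  · exact ⟨⟨j, r, hjr, h1⟩⟩

noncomputable def sumOf : List (ModuleCat.{u} A) → ModuleCat.{u} A
  | [] => ModuleCat.of A PUnit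
  | X :: l => X ⊞ sumOf l

theorem isZero_sumOf_nil : IsZero (sumOf ([] : List (ModuleCat.{u} A))) := by
  unfold sumOf
  exact ModuleCat.isZero_of_subsingleton _

/-- split an idempotent -/
noncomputable def idemSplit {M : ModuleCat.{u} A} (e : M ⟶ M) (he : e ≫ e = e) :
    M ≅ ModuleCat.of A (LinearMap.range e.hom) ⊞ ModuleCat.of A (LinearMap.ker e.hom) := by
  have hidem : ∀ x : M, e (e x) = e x := fun x => ConcreteCategory.congr_hom he x
  let R := ModuleCat.of A (LinearMap.range e.hom)
  let K := ModuleCat.of A (LinearMap.ker e.hom)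
  let π₁ : M ⟶ R := ModuleCat.ofHom (LinearMap.codRestrict (LinearMap.range e.hom) e.hom fun x => ⟨x, rfl⟩)
  let π₂ : M ⟶ K := ModuleCat.ofHom (LinearMap.codRestrict (LinearMap.ker e.hom) ((𝟙 M : M ⟶ M) - e).hom fun x => by
    have hx : e (((𝟙 M : M ⟶ M) - e) x) = e (x - e x) := rfl
    rw [LinearMap.mem_ker]; exact (show e (((𝟙 M : M ⟶ M) - e) x) = 0 by rw [hx, map_sub, hidem, sub_self]))
  let ι₁ : R ⟶ M := ModuleCat.ofHom (Submodule.subtype _)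
  let ι₂ : K ⟶ M := ModuleCat.ofHom (Submodule.subtype _)
  have h11 : ι₁ ≫ π₁ = 𝟙 R := by
    apply ModuleCat.hom_ext; apply LinearMap.ext; rintro ⟨x, hx⟩
    obtain ⟨y, rfl⟩ := hx
    exact Subtype.ext (hidem y)
  have h12 : ι₁ ≫ π₂ = 0 := by
    apply ModuleCat.hom_ext; apply LinearMap.ext; rintro ⟨x, hx⟩
    obtain ⟨y, rfl⟩ := hx
    refine Subtype.ext ?_
    show e y - e (e y) = (0 : M)
    rw [hidem]; abel
  have h21 : ι₂ ≫ π₁ = 0 := by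
    apply ModuleCat.hom_ext; apply LinearMap.ext; rintro ⟨x, hx⟩
    rw [LinearMap.mem_ker] at hx
    exact Subtype.ext hx
  have h22 : ι₂ ≫ π₂ = 𝟙 K := by
    apply ModuleCat.hom_ext; apply LinearMap.ext; rintro ⟨x, hx⟩
    rw [LinearMap.mem_ker] at hx
    refine Subtype.ext ?_
    show x - e.hom x = x
    rw [hx]; abel
  refine ⟨biprod.lift π₁ π₂, biprod.desc ι₁ ι₂, ?_, ?_⟩
  · rw [biprod.lift_desc]
    apply ModuleCat.hom_ext; apply LinearMap.ext; intro x
    show e x + (x - e x) = x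
    abel
  · apply biprod.hom_ext' <;> [rw [biprod.inl_desc_assoc]; rw [biprod.inr_desc_assoc]] <;>
      apply biprod.hom_ext <;>
      simp [h11, h12, h21, h22] <;> rfl

noncomputable def sumOfAppend : ∀ l₁ l₂ : List (ModuleCat.{u} A),
    sumOf (l₁ ++ l₂) ≅ (sumOf l₁ ⊞ sumOf l₂ : ModuleCat.{u} A)
  | [], l₂ => (isoZeroBiprod isZero_sumOf_nil : sumOf l₂ ≅ _)
  | X :: l₁, l₂ =>
    (biprod.mapIso (Iso.refl X) (sumOfAppend l₁ l₂)) ≪≫ (biprod.associator _ _ _).symm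

theorem exists_decomp (M : ModuleCat.{u} A) (hart : IsArtinian A M) (hnoe : IsNoetherian A M) :
    ∃ l : List (ModuleCat.{u} A), (∀ X ∈ l, Indec X ∧ Module.Finite A X) ∧
      Nonempty (M ≅ sumOf l) := by
  have key : ∀ p : Submodule A M, ∃ l : List (ModuleCat.{u} A),
      (∀ X ∈ l, Indec X ∧ Module.Finite A X) ∧ Nonempty (ModuleCat.of A p ≅ sumOf l) := by
    have hwf : WellFounded ((· < ·) : Submodule A M → Submodule A M → Prop) := wellFounded_lt
    intro p
    induction p using hwf.induction with
    | _ p IH =>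
      by_cases hz : IsZero (ModuleCat.of A p)
      · exact ⟨[], by simp, ⟨hz.iso isZero_sumOf_nil⟩⟩
      by_cases hind : Indec (ModuleCat.of A p)
      · refine ⟨[ModuleCat.of A p], ?_, ⟨isoBiprodZero isZero_sumOf_nil⟩⟩
        intro X hX
        simp only [List.mem_singleton] at hX
        subst hX
        exact ⟨hind, Module.Finite.iff_fg.mpr (IsNoetherian.noetherian p)⟩
      have hne : ¬ ∀ e : ModuleCat.of A p ⟶ ModuleCat.of A p,
          e ≫ e = e → e = 0 ∨ e = 𝟙 _ := fun hall => hind ⟨hz, hall⟩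
      push_neg at hne
      obtain ⟨e, he, hne0, hne1⟩ := hne
      set q₁ := Submodule.map p.subtype (LinearMap.range e.hom) with hq₁
      set q₂ := Submodule.map p.subtype (LinearMap.ker e.hom) with hq₂
      have hinj := Submodule.injective_subtype p
      have hlt₁ : q₁ < p := by
        refine lt_of_le_of_ne (Submodule.map_subtype_le p _) fun hcon => hne1 ?_
        have : LinearMap.range e.hom = ⊤ := by
          apply Submodule.map_injective_of_injective hinj
          rw [← hq₁, hcon, Submodule.map_subtype_top]
        have hsurj := LinearMap.range_eq_top.mp this
        apply ModuleCat.hom_ext; apply LinearMap.ext; intro x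
        obtain ⟨y, rfl⟩ := hsurj x
        exact ConcreteCategory.congr_hom he y
      have hlt₂ : q₂ < p := by
        refine lt_of_le_of_ne (Submodule.map_subtype_le p _) fun hcon => hne0 ?_
        have : LinearMap.ker e.hom = ⊤ := by
          apply Submodule.map_injective_of_injective hinj
          rw [← hq₂, hcon, Submodule.map_subtype_top]
        apply ModuleCat.hom_ext; apply LinearMap.ext; intro x
        exact (LinearMap.mem_ker).mp (this ▸ Submodule.mem_top)
      obtain ⟨l₁, hl₁, ⟨φ₁⟩⟩ := IH q₁ hlt₁
      obtain ⟨l₂, hl₂, ⟨φ₂⟩⟩ := IH q₂ hlt₂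
      refine ⟨l₁ ++ l₂, ?_, ?_⟩
      · intro X hX
        rcases List.mem_append.mp hX with h | h
        exacts [hl₁ X h, hl₂ X h]
      · refine ⟨idemSplit e he ≪≫ biprod.mapIso ?_ ?_ ≪≫ (sumOfAppend l₁ l₂).symm⟩
        · exact (Submodule.equivMapOfInjective p.subtype hinj _).toModuleIso ≪≫ φ₁
        · exact (Submodule.equivMapOfInjective p.subtype hinj _).toModuleIso ≪≫ φ₂
  obtain ⟨l, hl, ⟨φ⟩⟩ := key ⊤
  exact ⟨l, hl, ⟨(Submodule.topEquiv (R := A) (M := M)).toModuleIso.symm ≪≫ φ⟩⟩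


theorem sumOf_components : ∀ (l : List (ModuleCat.{u} A)) (M : ModuleCat.{u} A)
    (φ : M ≅ sumOf l),
    ∃ (e : ∀ i : Fin l.length, l.get i ⟶ M) (p : ∀ i : Fin l.length, M ⟶ l.get i),
      (∀ i, e i ≫ p i = 𝟙 _) ∧ (∑ i, p i ≫ e i) = 𝟙 M := by
  intro l
  induction l with
  | nil =>
    intro M φ
    have hz : IsZero M := isZero_sumOf_nil.of_iso φ
    refine ⟨fun i => i.elim0, fun i => i.elim0, fun i => i.elim0, ?_⟩
    have h0 : (𝟙 M : M ⟶ M) = 0 := hz.eq_of_src _ _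
    simp [h0]
  | cons X l IH =>
    intro M φ
    rw [show sumOf (X :: l) = (X ⊞ sumOf l : ModuleCat.{u} A) from rfl] at φ
    obtain ⟨e', p', hep', hsum'⟩ := IH (sumOf l) (Iso.refl _)
    refine ⟨Fin.cases (biprod.inl ≫ φ.inv) (fun i => e' i ≫ biprod.inr ≫ φ.inv),
      Fin.cases (φ.hom ≫ biprod.fst) (fun i => φ.hom ≫ biprod.snd ≫ p' i), ?_, ?_⟩
    · intro i
      induction i using Fin.cases with
      | zero => show (biprod.inl ≫ φ.inv) ≫ (φ.hom ≫ biprod.fst) = 𝟙 X; simp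
      | succ i =>
        simp only [Fin.cases_succ]
        rw [Category.assoc, Category.assoc, Iso.inv_hom_id_assoc]
        show e' i ≫ biprod.inr ≫ biprod.snd ≫ p' i = _
        rw [biprod.inr_snd_assoc]
        exact hep' i
    · show (∑ i : Fin (l.length + 1), _) = 𝟙 M
      rw [Fin.sum_univ_succ]
      simp only [Fin.cases_zero, Fin.cases_succ]
      have : ∀ i : Fin l.length,
          (φ.hom ≫ biprod.snd ≫ p' i) ≫ (e' i ≫ biprod.inr ≫ φ.inv)
          = φ.hom ≫ (biprod.snd ≫ (p' i ≫ e' i) ≫ biprod.inr) ≫ φ.inv := by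
        intro i; simp only [Category.assoc]
      rw [Finset.sum_congr rfl fun i _ => this i, ← Preadditive.comp_sum]
      have hinner : (∑ j : Fin l.length, (biprod.snd ≫ (p' j ≫ e' j) ≫ biprod.inr) ≫ φ.inv)
          = (biprod.snd ≫ biprod.inr : (X ⊞ sumOf l : ModuleCat.{u} A) ⟶ _) ≫ φ.inv := by
        rw [← Preadditive.sum_comp]
        congr 1
        rw [← Preadditive.comp_sum, ← Preadditive.sum_comp, hsum', Category.id_comp]
      rw [hinner]
      have htot : φ.hom ≫ (biprod.fst ≫ biprod.inl + biprod.snd ≫ biprod.inr) ≫ φ.inv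
          = 𝟙 M := by
        rw [biprod.total, Category.id_comp, φ.hom_inv_id]
      rw [← htot]
      simp only [Preadditive.comp_add, Preadditive.add_comp, Category.assoc]
      rfl

theorem exists_trace (P : TorsionPair A) [IsNoetherianRing A] (M : ModuleCat.{u} A)
    (hfin : Module.Finite A M) :
    ∃ tr : Submodule A M, ModuleCat.of A tr ∈ P.tors ∧
      ModuleCat.of A (M ⧸ tr) ∈ P.free ∧
      ∀ p : Submodule A M, ModuleCat.of A p ∈ P.tors → p ≤ tr := by
  haveI := hfin
  haveI : IsNoetherian A M := inferInstance
  set S : Set (Submodule A M) := {p | ModuleCat.of A p ∈ P.tors} with hS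
  have hbot : (⊥ : Submodule A M) ∈ S := P.zero_mem (ModuleCat.isZero_of_subsingleton _)
  obtain ⟨tr, htrS, hmax⟩ := (set_has_maximal_iff_noetherian.mpr inferInstance) S ⟨⊥, hbot⟩
  have hgreatest : ∀ p : Submodule A M, ModuleCat.of A p ∈ P.tors → p ≤ tr := by
    intro p hp
    have hsup : ModuleCat.of A ↥(p ⊔ tr) ∈ P.tors := by
      set F : (ModuleCat.of A p ⊞ ModuleCat.of A tr : ModuleCat.{u} A) ⟶
          ModuleCat.of A ↥(p ⊔ tr) :=
        biprod.desc (ModuleCat.ofHom (Submodule.inclusion le_sup_left)) (ModuleCat.ofHom (Submodule.inclusion le_sup_right)) with hF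
      set inlm : ModuleCat.of A p ⟶ (ModuleCat.of A p ⊞ ModuleCat.of A tr : ModuleCat.{u} A) :=
        biprod.inl with hinlm
      set inrm : ModuleCat.of A tr ⟶ (ModuleCat.of A p ⊞ ModuleCat.of A tr : ModuleCat.{u} A) :=
        biprod.inr with hinrm
      have hl0 : inlm ≫ F = ModuleCat.ofHom (Submodule.inclusion (le_sup_left : p ≤ p ⊔ tr)) := by
        rw [hinlm, hF]; exact biprod.inl_desc _ _
      have hr0 : inrm ≫ F = ModuleCat.ofHom (Submodule.inclusion (le_sup_right : tr ≤ p ⊔ tr)) := by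
        rw [hinrm, hF]; exact biprod.inr_desc _ _
      have hl : ∀ y : ModuleCat.of A p,
          F (inlm y) = Submodule.inclusion (le_sup_left : p ≤ p ⊔ tr) y :=
        fun y => ConcreteCategory.congr_hom hl0 y
      have hr : ∀ z : ModuleCat.of A tr,
          F (inrm z) = Submodule.inclusion (le_sup_right : tr ≤ p ⊔ tr) z :=
        fun z => ConcreteCategory.congr_hom hr0 z
      have hsurj : Function.Surjective F := by
        rintro ⟨x, hx⟩
        obtain ⟨y, hy, z, hz, rfl⟩ := Submodule.mem_sup.mp hx
        refine ⟨inlm (⟨y, hy⟩ : ModuleCat.of A p) + inrm (⟨z, hz⟩ : ModuleCat.of A tr), ?_⟩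
        rw [map_add, hl, hr]
        rfl
      exact P.quotient_mem F hsurj (P.biprod_mem hp htrS)
    have heq : p ⊔ tr = tr := by
      by_contra hne
      exact hmax _ hsup (lt_of_le_of_ne le_sup_right (Ne.symm hne))
    calc p ≤ p ⊔ tr := le_sup_left
    _ = tr := heq
  refine ⟨tr, htrS, ?_, hgreatest⟩
  refine P.max_free _ (Module.Finite.of_surjective (M := M) tr.mkQ
    (Submodule.mkQ_surjective tr)) ?_
  intro Z hZ w
  set U := Submodule.comap tr.mkQ (LinearMap.range w.hom) with hU
  have htrU : tr ≤ U := by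
    intro x hx
    show tr.mkQ x ∈ LinearMap.range w.hom
    have : tr.mkQ x = 0 := (Submodule.Quotient.mk_eq_zero tr).mpr hx
    rw [this]
    exact Submodule.zero_mem _
  have hrw : ModuleCat.of A (LinearMap.range w.hom) ∈ P.tors :=
    P.quotient_mem (ModuleCat.ofHom (LinearMap.rangeRestrict w.hom)) (LinearMap.surjective_rangeRestrict w.hom) hZ
  have hUmem : ModuleCat.of A U ∈ P.tors := by
    set finc : ModuleCat.of A tr ⟶ ModuleCat.of A U := ModuleCat.ofHom (Submodule.inclusion htrU) with hfinc
    set gq : ModuleCat.of A U ⟶ ModuleCat.of A (LinearMap.range w.hom) :=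
      ModuleCat.ofHom (LinearMap.codRestrict (LinearMap.range w.hom) ((tr.mkQ).comp U.subtype) (fun u => u.2)) with hgq
    have hses : IsSES finc gq := by
      refine ⟨Submodule.inclusion_injective htrU, ?_, ?_⟩
      · rintro ⟨y, hy⟩
        obtain ⟨m, hm⟩ := Submodule.mkQ_surjective tr y
        have hmU : m ∈ U := by show tr.mkQ m ∈ LinearMap.range w.hom; rw [hm]; exact hy
        exact ⟨⟨m, hmU⟩, Subtype.ext hm⟩
      · intro u
        constructor
        · intro h0
          have : tr.mkQ u.val = 0 := congrArg Subtype.val h0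
          have hmem : u.val ∈ tr := (Submodule.Quotient.mk_eq_zero tr).mp this
          exact ⟨⟨u.val, hmem⟩, Subtype.ext rfl⟩
        · rintro ⟨a, rfl⟩
          refine Subtype.ext ?_
          show tr.mkQ (Submodule.inclusion htrU a).1 = 0
          exact (Submodule.Quotient.mk_eq_zero tr).mpr a.2
    have hUfg : Module.Finite A (ModuleCat.of A U) :=
      Module.Finite.iff_fg.mpr (IsNoetherian.noetherian U)
    exact P.ext_mem finc gq hses hUfg htrS hrw
  have hUeq : U = tr := le_antisymm (hgreatest U hUmem) htrU
  refine hom_eq_zero' w fun z => ?_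
  have : w z ∈ LinearMap.range w.hom := ⟨z, rfl⟩
  obtain ⟨m, hm⟩ := Submodule.mkQ_surjective tr (w z)
  have hmU : m ∈ U := by show tr.mkQ m ∈ LinearMap.range w.hom; rw [hm]; exact this
  rw [← hm]
  exact (Submodule.Quotient.mk_eq_zero tr).mpr (hUeq ▸ hmU)

theorem tauinv_mem_of_indec (τ : ARTranslation A) (P : TorsionPair A) (hsplit : P.Splitting)
    [IsArtinianRing A] [IsNoetherianRing A]
    {X : ModuleCat.{u} A} (hX : X ∈ P.tors) (hind : Indec X) : τ.τinv X ∈ P.tors := by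
  classical
  haveI hXfg := P.fg_tors X hX
  by_cases hinj : Injective X
  · exact P.zero_mem (τ.τinv_inj X hXfg hinj)
  obtain ⟨E, f, g, has⟩ := τ.τinv_spec X hXfg hind hinj
  have hNfg : Module.Finite A (τ.τinv X) := τ.fg_τinv X hXfg
  rcases hsplit (τ.τinv X) hNfg has.indec_right with hNt | hNf
  · exact hNt
  exfalso
  haveI hEfg : Module.Finite A E := finite_of_ses has.ses hXfg hNfg
  obtain ⟨l, hl, ⟨φ⟩⟩ := exists_decomp E inferInstance inferInstance
  obtain ⟨e, p, hep, hsum⟩ := sumOf_components l E φ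
  set q : E ⟶ E :=
    ∑ i ∈ Finset.univ.filter (fun i : Fin l.length => l.get i ∈ P.tors), p i ≫ e i with hq
  have hq2 : f ≫ q = f := by
    have htot : (∑ i : Fin l.length, f ≫ (p i ≫ e i)) = f := by
      rw [← Preadditive.comp_sum, hsum, Category.comp_id]
    rw [← Finset.sum_filter_add_sum_filter_not Finset.univ
      (fun i : Fin l.length => l.get i ∈ P.tors)] at htot
    have hzero : ∀ i ∈ Finset.univ.filter (fun i : Fin l.length => ¬ l.get i ∈ P.tors),
        f ≫ (p i ≫ e i) = 0 := by
      intro i hi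
      simp only [Finset.mem_filter] at hi
      have hfree : l.get i ∈ P.free :=
        (hsplit (l.get i) (hl _ (List.get_mem l i)).2 (hl _ (List.get_mem l i)).1).resolve_left
          hi.2
      have h0 : f ≫ p i = 0 := P.hom_zero X hX _ hfree _
      rw [← Category.assoc, h0, Limits.zero_comp]
    rw [Finset.sum_eq_zero hzero, add_zero] at htot
    rw [hq, Preadditive.comp_sum]
    exact htot
  have hq1 : q ≫ g = 0 := by
    rw [hq, Preadditive.sum_comp]
    refine Finset.sum_eq_zero fun i hi => ?_
    simp only [Finset.mem_filter] at hi
    have h0 : e i ≫ g = 0 := P.hom_zero _ hi.2 _ hNf _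
    rw [Category.assoc, h0, Limits.comp_zero]
  have hrange : ∀ y : E, q y ∈ LinearMap.range f.hom := by
    intro y
    have hgq : g (q y) = 0 := ConcreteCategory.congr_hom hq1 y
    obtain ⟨x, hx⟩ := (has.ses.2.2 (q y)).mp hgq
    exact ⟨x, hx⟩
  have hfinj : Function.Injective f := has.ses.1
  set feq := LinearEquiv.ofInjective f.hom hfinj with hfeq
  set r : E ⟶ X :=
    ModuleCat.ofHom (feq.symm.toLinearMap.comp (LinearMap.codRestrict (LinearMap.range f.hom) q.hom hrange)) with hrdef
  have hfr : f ≫ r = 𝟙 X := by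
    apply ModuleCat.hom_ext; apply LinearMap.ext; intro x
    show feq.symm ⟨q (f x), hrange (f x)⟩ = x
    rw [LinearEquiv.symm_apply_eq]
    refine Subtype.ext ?_
    show q (f x) = ((feq x : LinearMap.range f.hom) : E)
    have hqf : q (f x) = f x := ConcreteCategory.congr_hom hq2 x
    rw [hqf]
    exact (LinearEquiv.ofInjective_apply f.hom (h := hfinj) x).symm
  obtain ⟨s, hs⟩ := section_of_retraction has.ses r hfr
  exact has.not_split ⟨s, hs⟩

theorem tauinv_sumOf_mem (τ : ARTranslation A) (P : TorsionPair A) :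
    ∀ l : List (ModuleCat.{u} A), (∀ i : Fin l.length, τ.τinv (l.get i) ∈ P.tors) →
      τ.τinv (sumOf l) ∈ P.tors := by
  intro l
  induction l with
  | nil =>
    intro _
    have hz : IsZero (sumOf ([] : List (ModuleCat.{u} A))) := isZero_sumOf_nil
    exact P.zero_mem (τ.τinv_inj _ (finite_of_isZero hz) (injective_of_isZero hz))
  | cons X l IH =>
    intro h
    have h0 : τ.τinv X ∈ P.tors := h ⟨0, Nat.succ_pos _⟩
    have hrest : τ.τinv (sumOf l) ∈ P.tors := IH fun i => h i.succ
    obtain ⟨ψ⟩ := τ.τinv_add X (sumOf l)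
    have heq : τ.τinv (sumOf (X :: l)) = τ.τinv (X ⊞ sumOf l : ModuleCat.{u} A) := rfl
    rw [heq]
    exact P.iso_mem ψ.symm (P.biprod_mem h0 hrest)

end Aux


/-- a tilted algebra: the endomorphism algebra of a tilting module over a
finite-dimensional hereditary algebra. -/
structure TiltedWitness (k : Type u) [Field k] (A : Type u) [Ring A] [Algebra k A] where
  H : Type u
  [ringH : Ring H]
  [algH : Algebra k H]
  findim : FiniteDimensional k H
  hered : ∀ M : ModuleCat.{u} H, Module.Finite H M → ProjDimLE 1 M
  T : Type u
  [acg : AddCommGroup T]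
  [modH : Module H T]
  [modk : Module k T]
  [tower : IsScalarTower k H T]
  [scc : SMulCommClass H k T]
  tilt : IsTilting (ModuleCat.of H T)
  iso : Nonempty (A ≃ₐ[k] (T →ₗ[H] T))

def IsTiltedAlg (k : Type u) [Field k] (A : Type u) [Ring A] [Algebra k A] : Prop :=
  Nonempty (TiltedWitness k A)

/-- A torsion pair in mod Λ is splitting iff the torsion class is closed under τ⁻¹. -/
theorem stmt1 (k : Type u) [Field k] [IsAlgClosed k]
    (A : Type u) [Ring A] [Algebra k A] [FiniteDimensional k A]
    (τ : ARTranslation A) (P : TorsionPair A) :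
    P.Splitting ↔ ∀ M ∈ P.tors, τ.τinv M ∈ P.tors := by
  classical
  haveI hartA : IsArtinianRing A := isArtinian_of_tower k inferInstance
  haveI hnoeA : IsNoetherianRing A := isNoetherian_of_tower k inferInstance
  constructor
  · -- splitting implies torsion class closed under τ⁻¹
    intro hsplit M hM
    haveI hMfg := P.fg_tors M hM
    obtain ⟨l, hl, ⟨φ⟩⟩ := exists_decomp M inferInstance inferInstance
    obtain ⟨e, p, hep, hsum⟩ := sumOf_components l M φ
    have hcomp : ∀ i : Fin l.length, τ.τinv (l.get i) ∈ P.tors := fun i =>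
      tauinv_mem_of_indec τ P hsplit (P.retract_mem (e i) (p i) (hep i) hM)
        (hl _ (List.get_mem l i)).1
    have hsl := tauinv_sumOf_mem τ P l hcomp
    obtain ⟨ψ⟩ := τ.τinv_iso M (sumOf l) ⟨φ⟩
    exact P.iso_mem ψ.symm hsl
  · -- closure under τ⁻¹ implies splitting
    intro hyp M hMfg hMind
    by_cases ht : M ∈ P.tors
    · exact Or.inl ht
    right
    by_contra hf
    have hnot : ¬ ∀ X ∈ P.tors, ∀ u : X ⟶ M, u = 0 := fun hall =>
      hf (P.max_free M hMfg hall)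
    push_neg at hnot
    obtain ⟨X0, hX0, u, hu⟩ := hnot
    obtain ⟨tr, htr, hQfree, hgreatest⟩ := exists_trace P M hMfg
    have hrange_le : LinearMap.range u.hom ≤ tr :=
      hgreatest _ (P.quotient_mem (ModuleCat.ofHom (LinearMap.rangeRestrict u.hom))
        (LinearMap.surjective_rangeRestrict u.hom) hX0)
    have htrne : ¬ IsZero (ModuleCat.of A tr) := by
      intro hz
      have hsub := subsingleton_of_isZero hz
      apply hu
      refine hom_eq_zero' u fun x => ?_
      have hx : u x ∈ tr := hrange_le ⟨x, rfl⟩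
      have h2 : (⟨u x, hx⟩ : tr) = ⟨0, tr.zero_mem⟩ := @Subsingleton.elim _ hsub _ _
      exact congrArg Subtype.val h2
    haveI : Module.Finite A (ModuleCat.of A tr) := P.fg_tors _ htr
    obtain ⟨l, hl, ⟨φ⟩⟩ := exists_decomp (ModuleCat.of A tr) inferInstance inferInstance
    obtain ⟨e, p, hep, hsum⟩ := sumOf_components l _ φ
    have hlne : l ≠ [] := by
      rintro rfl
      exact htrne (isZero_sumOf_nil.of_iso φ)
    have hlen : 0 < l.length := List.length_pos_iff.mpr hlne
    set i0 : Fin l.length := ⟨0, hlen⟩ with hi0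
    set Y := l.get i0 with hY
    have hYind : Indec Y := (hl Y (List.get_mem l i0)).1
    have hYtors : Y ∈ P.tors := P.retract_mem (e i0) (p i0) (hep i0) htr
    set ι : ModuleCat.of A tr ⟶ M := ModuleCat.ofHom tr.subtype with hιdef
    set j : Y ⟶ M := e i0 ≫ ι with hjdef
    by_cases hsm : ∃ r : M ⟶ Y, j ≫ r = 𝟙 Y
    · obtain ⟨r, hr⟩ := hsm
      obtain ⟨iso⟩ := iso_of_retract_of_indec hMind hYind.1 j r hr
      exact ht (P.iso_mem iso hYtors)
    have hYnotinj : ¬ Injective Y := by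
      intro hYinj
      haveI := hYinj
      have hinj_e : Function.Injective (e i0) := by
        intro a b hab
        have h1 : p i0 (e i0 a) = a := ConcreteCategory.congr_hom (hep i0) a
        have h2 : p i0 (e i0 b) = b := ConcreteCategory.congr_hom (hep i0) b
        rw [← h1, ← h2, hab]
      have hmono : Mono j := by
        rw [ModuleCat.mono_iff_injective]
        exact (Submodule.injective_subtype tr).comp hinj_e
      obtain ⟨r, hr⟩ := Injective.factors (𝟙 Y) j
      exact hsm ⟨r, hr⟩
    haveI hYfg := P.fg_tors Y hYtors
    obtain ⟨E₀, f₀, g₀, has⟩ := τ.τinv_spec Y hYfg hYind hYnotinj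
    obtain ⟨t, hft⟩ := has.left_almost M j hsm
    set piQ : M ⟶ ModuleCat.of A (M ⧸ tr) := ModuleCat.ofHom tr.mkQ with hpiQ
    have hιπ : ι ≫ piQ = 0 :=
      hom_eq_zero' _ fun x => (Submodule.Quotient.mk_eq_zero tr).mpr x.2
    have h1 : f₀ ≫ (t ≫ piQ) = 0 := by
      rw [← Category.assoc, hft, hjdef, Category.assoc, hιπ, Limits.comp_zero]
    obtain ⟨w, hw⟩ := factor_thru has.ses.2.1 has.ses.2.2 (t ≫ piQ) h1
    have hw0 : w = 0 := P.hom_zero _ (hyp Y hYtors) _ hQfree w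
    have htπ : t ≫ piQ = 0 := by rw [← hw, hw0, Limits.comp_zero]
    have htmem : ∀ x : E₀, t x ∈ tr := fun x =>
      (Submodule.Quotient.mk_eq_zero tr).mp (ConcreteCategory.congr_hom htπ x)
    set tt : E₀ ⟶ ModuleCat.of A tr := ModuleCat.ofHom (LinearMap.codRestrict tr t.hom htmem) with htt
    have hfe : f₀ ≫ tt = e i0 := by
      apply ModuleCat.hom_ext; apply LinearMap.ext; intro x
      refine Subtype.ext ?_
      show t (f₀ x) = Subtype.val (e i0 x)
      exact ConcreteCategory.congr_hom hft x
    have hfr : f₀ ≫ (tt ≫ p i0) = 𝟙 Y := by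
      rw [← Category.assoc, hfe, hep]
    obtain ⟨s, hs⟩ := section_of_retraction has.ses _ hfr
    exact has.not_split ⟨s, hs⟩
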